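/- Let a₁, b₁, c₁, d₁, a₂, b₂, c₂, d₂ be integers with c₁ ≠ 0. Set D₁ = a₁*b₂ - a₂*b₁, D₂ = b₁*c₂ - b₂*c₁, D₃ = a₁*c₂ - a₂*c₁, D = d₁*c₂ - d₂*c₁, and assume D₂ and D₃ are not both zero. Let D₂₃ = gcd(D₂, D₃) and δ = gcd(c₁*D₁/D₂₃, c₁). Suppose (x₁, y₁) are integers with D₃*x₁ + D₂*y₁ = D, and (m₁, z₁) are integers with (c₁*D₁/D₂₃)*m₁ + c₁*z₁ = d₁ - a₁*x₁ - b₁*y₁. Then a triple of integers (x, y, z) satisfies both a₁*x + b₁*y + c₁*z = d₁ and a₂*x + b₂*y + c₂*z = d₂ if and only if there exists an integer λ such that x = x₁ - (D₂/D₂₃)*(m₁ - (c₁/δ)*λ), y = y₁ + (D₃/D₂₃)*(m₁ - (c₁/δ)*λ), and z = z₁ + ((c₁*D₁/D₂₃)/δ)*λ. -/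

import Mathlib

private lemma coprime_split (p q u v : ℤ) (h : IsCoprime p q) (hpq : p * u + q * v = 0) :
    ∃ s : ℤ, u = q * s ∧ v = -(p * s) := by
  obtain ⟨a, b, hab⟩ := h
  refine ⟨b * u - a * v, ?_, ?_⟩
  · linear_combination (-u) * hab + a * hpq
  · linear_combination (-v) * hab + b * hpq

theorem formula4_part_ii (a₁ b₁ c₁ d₁ a₂ b₂ c₂ d₂ : ℤ) (hc₁ : c₁ ≠ 0)
    (D₁ D₂ D₃ D : ℤ)
    (hD₁ : D₁ = a₁ * b₂ - a₂ * b₁) (hD₂ : D₂ = b₁ * c₂ - b₂ * c₁)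
    (hD₃ : D₃ = a₁ * c₂ - a₂ * c₁) (hD : D = d₁ * c₂ - d₂ * c₁)
    (hnz : ¬ (D₂ = 0 ∧ D₃ = 0))
    (D₂₃ δ : ℤ) (hD₂₃ : D₂₃ = (Int.gcd D₂ D₃ : ℤ))
    (hδ : δ = (Int.gcd (c₁ * D₁ / D₂₃) c₁ : ℤ))
    (x₁ y₁ m₁ z₁ : ℤ)
    (hxy : D₃ * x₁ + D₂ * y₁ = D)
    (hmz : (c₁ * D₁ / D₂₃) * m₁ + c₁ * z₁ = d₁ - a₁ * x₁ - b₁ * y₁)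
    (x y z : ℤ) :
    (a₁ * x + b₁ * y + c₁ * z = d₁ ∧ a₂ * x + b₂ * y + c₂ * z = d₂) ↔
      ∃ lam : ℤ,
        x = x₁ - (D₂ / D₂₃) * (m₁ - (c₁ / δ) * lam) ∧
        y = y₁ + (D₃ / D₂₃) * (m₁ - (c₁ / δ) * lam) ∧
        z = z₁ + ((c₁ * D₁ / D₂₃) / δ) * lam := by
  have hD23pos : 0 < Int.gcd D₂ D₃ := Int.gcd_pos_iff.mpr (by tauto)
  have h23ne : D₂₃ ≠ 0 := by rw [hD₂₃]; exact_mod_cast hD23pos.ne'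
  have hdvd2 : D₂₃ ∣ D₂ := hD₂₃ ▸ Int.gcd_dvd_left D₂ D₃
  have hdvd3 : D₂₃ ∣ D₃ := hD₂₃ ▸ Int.gcd_dvd_right D₂ D₃
  set E₂ := D₂ / D₂₃ with hE₂def
  set E₃ := D₃ / D₂₃ with hE₃def
  have hE₂ : D₂ = D₂₃ * E₂ := (Int.mul_ediv_cancel' hdvd2).symm
  have hE₃ : D₃ = D₂₃ * E₃ := (Int.mul_ediv_cancel' hdvd3).symm
  have hdvdG : D₂₃ ∣ c₁ * D₁ := by
    have h : c₁ * D₁ = -a₁ * D₂ + b₁ * D₃ := by rw [hD₁, hD₂, hD₃]; ring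
    rw [h]
    exact dvd_add (hdvd2.mul_left _) (hdvd3.mul_left _)
  set G := c₁ * D₁ / D₂₃ with hGdef
  have hG : c₁ * D₁ = D₂₃ * G := (Int.mul_ediv_cancel' hdvdG).symm
  have hδpos : 0 < Int.gcd G c₁ := Int.gcd_pos_iff.mpr (Or.inr hc₁)
  have hδne : δ ≠ 0 := by rw [hδ]; exact_mod_cast hδpos.ne'
  have hdvdGδ : δ ∣ G := hδ ▸ Int.gcd_dvd_left G c₁
  have hdvdcδ : δ ∣ c₁ := hδ ▸ Int.gcd_dvd_right G c₁
  set C := c₁ / δ with hCdef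
  set G' := G / δ with hG'def
  have hC : c₁ = δ * C := (Int.mul_ediv_cancel' hdvdcδ).symm
  have hG'eq : G = δ * G' := (Int.mul_ediv_cancel' hdvdGδ).symm
  have key : -a₁ * E₂ + b₁ * E₃ = G := by
    apply mul_left_cancel₀ h23ne
    linear_combination a₁ * hE₂ - b₁ * hE₃ + hG - a₁ * hD₂ + b₁ * hD₃ - c₁ * hD₁
  have hcop23 : IsCoprime E₃ E₂ := by
    rw [Int.isCoprime_iff_gcd_eq_one]
    have h := Int.gcd_div_gcd_div_gcd (i := D₂) (j := D₃) hD23pos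
    rw [← hD₂₃] at h
    rw [hE₃def, hE₂def, Int.gcd_comm]
    exact h
  have hcopGC : IsCoprime G' C := by
    rw [Int.isCoprime_iff_gcd_eq_one]
    have h := Int.gcd_div_gcd_div_gcd (i := G) (j := c₁) hδpos
    rw [← hδ] at h
    exact h
  constructor
  · rintro ⟨h1, h2⟩
    have hDxy : D₃ * x + D₂ * y = D := by
      linear_combination c₂ * h1 - c₁ * h2 + x * hD₃ + y * hD₂ - hD
    have h0 : E₃ * (x - x₁) + E₂ * (y - y₁) = 0 := by
      apply mul_left_cancel₀ h23ne
      linear_combination hDxy - hxy - (x - x₁) * hE₃ - (y - y₁) * hE₂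
    obtain ⟨s, hs1, hs2⟩ := coprime_split E₃ E₂ (x - x₁) (y - y₁) hcop23 h0
    have h0' : G' * (-s - m₁) + C * (z - z₁) = 0 := by
      apply mul_left_cancel₀ hδne
      linear_combination h1 - hmz - a₁ * hs1 - b₁ * hs2 + s * key +
        (s + m₁) * hG'eq - (z - z₁) * hC
    obtain ⟨t, ht1, ht2⟩ := coprime_split G' C (-s - m₁) (z - z₁) hcopGC h0'
    refine ⟨-t, ?_, ?_, ?_⟩
    · linear_combination hs1 - E₂ * ht1
    · linear_combination hs2 + E₃ * ht1
    · linear_combination ht2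
  · rintro ⟨lam, hx, hy, hz⟩
    have h1 : a₁ * x + b₁ * y + c₁ * z = d₁ := by
      linear_combination a₁ * hx + b₁ * hy + c₁ * hz + hmz +
        (m₁ - C * lam) * key + (G' * lam) * hC - (C * lam) * hG'eq
    refine ⟨h1, ?_⟩
    apply mul_left_cancel₀ hc₁
    have hDxy : D₃ * x + D₂ * y = D := by
      linear_combination D₃ * hx + D₂ * hy + hxy +
        ((m₁ - C * lam)) * (E₃ * hE₂ - E₂ * hE₃)
    linear_combination c₂ * h1 - hDxy + x * hD₃ + y * hD₂ - hD
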